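/- Let (V,d) be a finite metric space, p ≥ 1 a real number, and let F, F* ⊆ V be nonempty sets with |F| = |F*| = k. Suppose F is single-swap locally optimal for the ℓ_p objective, i.e., for every r ∈ F and f' ∈ V we have Φ_p((F \ {r}) ∪ {f'}) ≥ Φ_p(F). Then Φ_p(F) ≤ 5p · Φ_p(F*). Moreover, in the case p = 2, the stronger bound Φ_2(F) ≤ 9 · Φ_2(F*) holds. -/

import Mathlib

section ScalarLemmas
open Real Set



/-- `log y ≤ (y - 1/y)/2` for `y ≥ 1`. -/
lemma log_le_half_sub {y : ℝ} (hy : 1 ≤ y) : Real.log y ≤ (y - y⁻¹) / 2 := by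
  set f : ℝ → ℝ := fun x => (x - x⁻¹) / 2 - Real.log x with hf
  have key : ∀ x : ℝ, 0 < x → HasDerivAt f ((1 - x⁻¹)^2 / 2) x := by
    intro x hx
    have h1 : HasDerivAt (fun x : ℝ => x⁻¹) (-(x^2)⁻¹) x := hasDerivAt_inv hx.ne'
    have h2 : HasDerivAt (fun x : ℝ => (x - x⁻¹) / 2) ((1 - -(x^2)⁻¹) / 2) x :=
      ((hasDerivAt_id x).sub h1).div_const 2
    have h3 : HasDerivAt f ((1 - -(x^2)⁻¹) / 2 - x⁻¹) x :=
      h2.sub (Real.hasDerivAt_log hx.ne')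
    convert h3 using 1
    field_simp
    ring
  have mono : MonotoneOn f (Ici (1:ℝ)) := by
    apply monotoneOn_of_deriv_nonneg (convex_Ici 1)
    · intro x hx
      have hx0 : (0:ℝ) < x := lt_of_lt_of_le one_pos hx
      exact (key x hx0).continuousAt.continuousWithinAt
    · intro x hx
      rw [interior_Ici] at hx
      exact ((key x (lt_trans one_pos hx)).differentiableAt).differentiableWithinAt
    · intro x hx
      rw [interior_Ici] at hx
      have hx0 : (0:ℝ) < x := lt_trans one_pos hx
      rw [(key x hx0).deriv]
      positivity
  have := mono (self_mem_Ici) hy hy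
  simp only [hf] at this
  simp only [inv_one, Real.log_one] at this
  linarith

/-- `log (1+x) ≤ x*(x+2)/(2*(1+x))` for `x ≥ 0`. -/
lemma log_one_add_le {x : ℝ} (hx : 0 ≤ x) :
    Real.log (1 + x) ≤ x * (x + 2) / (2 * (1 + x)) := by
  have h := log_le_half_sub (y := 1 + x) (by linarith)
  have h1 : (0:ℝ) < 1 + x := by linarith
  have : (1 + x - (1+x)⁻¹)/2 = x * (x+2)/(2*(1+x)) := by
    field_simp; ring
  linarith [this ▸ h]

/-- `x/(1+x) ≤ log (1+x)` for `x ≥ 0`. -/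
lemma le_log_one_add {x : ℝ} (hx : 0 ≤ x) : x / (1 + x) ≤ Real.log (1 + x) := by
  have h1 : (0:ℝ) < 1 + x := by linarith
  have h := Real.log_le_sub_one_of_pos (x := (1+x)⁻¹) (by positivity)
  rw [Real.log_inv] at h
  have : (1+x)⁻¹ - 1 = -(x/(1+x)) := by field_simp; ring
  rw [this] at h
  linarith

lemma exp_two_fifths_lt : Real.exp (2/5) < 1.494 := by
  have h : Real.exp (2/5) ^ (5:ℕ) = Real.exp 2 := by
    rw [← Real.exp_nat_mul]; norm_num
  have h2 : Real.exp 2 < 7.3890561 := by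
    have := Real.exp_one_lt_d9
    calc Real.exp 2 = Real.exp 1 ^ (2:ℕ) := by rw [← Real.exp_nat_mul]; norm_num
    _ < 2.7182818286 ^ (2:ℕ) := by
        exact pow_lt_pow_left₀ this (le_of_lt (Real.exp_pos 1)) (by norm_num)
    _ < 7.3890561 := by norm_num
  have h3 : Real.exp (2/5) ^ (5:ℕ) < 1.494 ^ (5:ℕ) := by
    rw [h]; nlinarith
  exact lt_of_pow_lt_pow_left₀ 5 (by norm_num) h3

lemma exp_11_30_lt : Real.exp (11/30) < 1.444 := by
  have h : Real.exp (11/30) ^ (30:ℕ) = Real.exp 11 := by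
    rw [← Real.exp_nat_mul]; norm_num
  have h2 : Real.exp 11 < 2.7182818286 ^ (11:ℕ) := by
    calc Real.exp 11 = Real.exp 1 ^ (11:ℕ) := by rw [← Real.exp_nat_mul]; norm_num
    _ < 2.7182818286 ^ (11:ℕ) := by
        exact pow_lt_pow_left₀ Real.exp_one_lt_d9 (le_of_lt (Real.exp_pos 1)) (by norm_num)
  have h4 : (2.7182818286:ℝ) ^ (11:ℕ) < 1.444 ^ (30:ℕ) := by norm_num
  have h3 : Real.exp (11/30) ^ (30:ℕ) < 1.444 ^ (30:ℕ) := by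
    rw [h]; linarith
  exact lt_of_pow_lt_pow_left₀ 30 (by norm_num) h3

lemma log_five_ge : (1.586:ℝ) ≤ Real.log 5 := by
  have h2 : (0.6931471803:ℝ) < Real.log 2 := Real.log_two_gt_d9
  have h54 : (1/5:ℝ) ≤ Real.log (5/4) := by
    have := le_log_one_add (x := (1/4:ℝ)) (by norm_num)
    norm_num at this
    exact this
  have : Real.log 5 = Real.log 2 + Real.log 2 + Real.log (5/4) := by
    rw [← Real.log_mul (by norm_num) (by norm_num), ← Real.log_mul (by norm_num) (by norm_num)]
    norm_num
  rw [this]; linarith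


section
variable {p : ℝ}

lemma deriv_aux1 {q : ℝ} (hq : 0 < q) :
    HasDerivAt (fun q : ℝ => q * Real.log (5*q)) (Real.log (5*q) + 1) q := by
  have h5q : (5:ℝ)*q ≠ 0 := by positivity
  have hlog : HasDerivAt (fun q : ℝ => Real.log (5*q)) ((5*q)⁻¹ * 5) q := by
    have hinner : HasDerivAt (fun q : ℝ => 5*q) 5 q := by
      simpa using (hasDerivAt_id q).const_mul (5:ℝ)
    exact (Real.hasDerivAt_log h5q).comp q hinner
  have h : HasDerivAt (fun q : ℝ => q * Real.log (5*q))
      (1 * Real.log (5*q) + q * ((5*q)⁻¹ * 5)) q := (hasDerivAt_id q).mul hlog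
  convert h using 1
  field_simp

lemma deriv_aux2 {q : ℝ} (hq : 0 < q) :
    HasDerivAt (fun q : ℝ => q * Real.log (5*q+2))
      (Real.log (5*q+2) + q * ((5*q+2)⁻¹ * 5)) q := by
  have h5q : (5:ℝ)*q + 2 ≠ 0 := by positivity
  have hlog : HasDerivAt (fun q : ℝ => Real.log (5*q+2)) ((5*q+2)⁻¹ * 5) q := by
    have hinner : HasDerivAt (fun q : ℝ => 5*q+2) 5 q := by
      simpa using ((hasDerivAt_id q).const_mul (5:ℝ)).add_const 2
    exact (Real.hasDerivAt_log h5q).comp q hinner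
  have h : HasDerivAt (fun q : ℝ => q * Real.log (5*q+2))
      (1 * Real.log (5*q+2) + q * ((5*q+2)⁻¹ * 5)) q := (hasDerivAt_id q).mul hlog
  convert h using 1
  simp [id_eq]
end

noncomputable def Gfun : ℝ → ℝ :=
  fun q => 3 * Real.exp (q * Real.log (5*q)) - 2 * Real.exp (q * Real.log (5*q+2))

lemma Gfun_hasDeriv {q : ℝ} (hq : 0 < q) :
    HasDerivAt Gfun
      (3 * (Real.exp (q * Real.log (5*q)) * (Real.log (5*q) + 1)) -
       2 * (Real.exp (q * Real.log (5*q+2)) *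
         (Real.log (5*q+2) + q * ((5*q+2)⁻¹ * 5)))) q := by
  exact (((deriv_aux1 hq).exp).const_mul 3).sub (((deriv_aux2 hq).exp).const_mul 2)

lemma Gfun_deriv_nonneg {q : ℝ} (hq1 : 1 ≤ q) (hq2 : q ≤ 2) :
    0 ≤ 3 * (Real.exp (q * Real.log (5*q)) * (Real.log (5*q) + 1)) -
       2 * (Real.exp (q * Real.log (5*q+2)) *
         (Real.log (5*q+2) + q * ((5*q+2)⁻¹ * 5))) := by
  have hq : (0:ℝ) < q := by linarith
  set x : ℝ := 2/(5*q) with hx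
  have hx0 : 0 < x := by positivity
  have hx1 : 1/5 ≤ x := by rw [hx]; rw [div_le_div_iff₀ (by norm_num) (by positivity)]; linarith
  have hx2 : x ≤ 2/5 := by rw [hx]; rw [div_le_div_iff₀ (by positivity) (by norm_num)]; linarith
  have h1x : (0:ℝ) < 1 + x := by linarith
  have hsplit : (5:ℝ)*q + 2 = (5*q) * (1+x) := by
    rw [hx]; field_simp
  have hlogsplit : Real.log (5*q+2) = Real.log (5*q) + Real.log (1+x) := by
    rw [hsplit, Real.log_mul (by positivity) (by positivity)]
  have hfrac : q * ((5*q+2)⁻¹ * 5) = 1 - x/(1+x) := by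
    rw [hx]
    have h1 : (5:ℝ)*q ≠ 0 := by positivity
    have h2 : (5:ℝ)*q+2 ≠ 0 := by positivity
    field_simp
    ring
  -- bound: q * log(1+x) ≤ 11/30
  have hlub := log_one_add_le hx0.le
  have hllb := le_log_one_add hx0.le
  have b1 : q * Real.log (1+x) ≤ 11/30 := by
    have h2 : q * Real.log (1+x) ≤ q * (x*(x+2)/(2*(1+x))) :=
      mul_le_mul_of_nonneg_left hlub hq.le
    have hqx : q * x = 2/5 := by rw [hx]; field_simp
    have h3 : q * (x*(x+2)/(2*(1+x))) = (q*x) * ((x+2)/(2*(1+x))) := by ring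
    rw [h3, hqx] at h2
    have h4 : (2/5:ℝ) * ((x+2)/(2*(1+x))) ≤ 11/30 := by
      calc (2/5:ℝ) * ((x+2)/(2*(1+x))) = (2*(x+2))/(5*(2*(1+x))) := by
            field_simp
      _ ≤ 11/30 := by
            rw [div_le_div_iff₀ (by positivity) (by norm_num)]
            nlinarith
    linarith
  have b2 : Real.log (1+x) - x/(1+x) ≤ 2/25 := by
    have e1 : x*(x+2)/(2*(1+x)) - x/(1+x) = x^2/(2*(1+x)) := by
      field_simp
      ring
    have e2 : x^2/(2*(1+x)) ≤ 2/25 := by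
      rw [div_le_div_iff₀ (by positivity) (by norm_num)]
      nlinarith
    linarith
  have b2' : 0 ≤ Real.log (1+x) - x/(1+x) := by linarith
  -- exp bound
  have b4 : Real.exp (q * Real.log (1+x)) ≤ 1.444 := by
    calc Real.exp (q * Real.log (1+x)) ≤ Real.exp (11/30) := Real.exp_le_exp.2 b1
    _ ≤ 1.444 := exp_11_30_lt.le
  have b5 : 2.586 ≤ Real.log (5*q) + 1 := by
    have : Real.log 5 ≤ Real.log (5*q) := by
      apply Real.log_le_log (by norm_num); linarith
    linarith [log_five_ge]
  have hE1 : 0 < Real.exp (q * Real.log (5*q)) := Real.exp_pos _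
  have hE2 : Real.exp (q * Real.log (5*q+2)) =
      Real.exp (q * Real.log (5*q)) * Real.exp (q * Real.log (1+x)) := by
    rw [← Real.exp_add, hlogsplit]; ring_nf
  rw [hE2, hlogsplit, hfrac]
  set E := Real.exp (q * Real.log (5*q))
  set L := Real.log (5*q)
  set e2 := Real.exp (q * Real.log (1+x))
  have he2 : 0 < e2 := Real.exp_pos _
  have hδ : Real.log (5*q) + Real.log (1+x) + (1 - x/(1+x)) =
      (L + 1) + (Real.log (1+x) - x/(1+x)) := by ring
  rw [hδ]
  have hL1 : (0:ℝ) < L + 1 := by linarith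
  nlinarith [mul_le_mul_of_nonneg_left b4 (le_of_lt hE1),
    mul_pos hE1 hL1, mul_le_mul_of_nonneg_left b2 (mul_pos hE1 he2).le,
    mul_le_mul_of_nonneg_right (mul_le_mul_of_nonneg_left b4 hE1.le) hL1.le]

lemma A_ge_one {p : ℝ} (hp : 1 ≤ p) :
    1 ≤ 3 * (5*p) ^ p - 2 * (5*p+2) ^ p := by
  have hp0 : (0:ℝ) < p := by linarith
  have h5p : (0:ℝ) < 5*p := by linarith
  have hr1 : (5*p) ^ p = Real.exp (p * Real.log (5*p)) := by
    rw [Real.rpow_def_of_pos h5p]; ring_nf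
  have hr2 : (5*p+2) ^ p = Real.exp (p * Real.log (5*p+2)) := by
    rw [Real.rpow_def_of_pos (by linarith)]; ring_nf
  rcases le_total p 2 with hple | hpge
  · -- monotonicity on [1,2]
    have hmono : MonotoneOn Gfun (Icc 1 2) := by
      apply monotoneOn_of_deriv_nonneg (convex_Icc 1 2)
      · intro q hq
        exact (Gfun_hasDeriv (by linarith [hq.1] : (0:ℝ) < q)).continuousAt.continuousWithinAt
      · intro q hq
        rw [interior_Icc] at hq
        exact (Gfun_hasDeriv (by linarith [hq.1] : (0:ℝ) < q)).differentiableAt.differentiableWithinAt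
      · intro q hq
        rw [interior_Icc] at hq
        rw [(Gfun_hasDeriv (by linarith [hq.1] : (0:ℝ) < q)).deriv]
        exact Gfun_deriv_nonneg (le_of_lt hq.1) (le_of_lt hq.2)
    have h1 : Gfun 1 = 1 := by
      simp only [Gfun]
      norm_num
      rw [Real.exp_log (by norm_num : (0:ℝ) < 5), Real.exp_log (by norm_num : (0:ℝ) < 7)]
      norm_num
    have := hmono (left_mem_Icc.2 (by norm_num)) ⟨hp, hple⟩ hp
    rw [h1] at this
    simpa [Gfun, hr1, hr2] using this
  · -- p ≥ 2
    set x : ℝ := 2/(5*p) with hx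
    have hx0 : 0 < x := by positivity
    have h1x : (0:ℝ) < 1 + x := by linarith
    have hsplit : (5:ℝ)*p + 2 = (5*p) * (1+x) := by
      rw [hx]; field_simp
    have hmul : (5*p+2) ^ p = (5*p) ^ p * (1+x) ^ p := by
      rw [hsplit, Real.mul_rpow h5p.le h1x.le]
    have hexp : (1+x) ^ p = Real.exp (p * Real.log (1+x)) := by
      rw [Real.rpow_def_of_pos h1x]; ring_nf
    have hloglex : Real.log (1+x) ≤ x := by
      have := Real.log_le_sub_one_of_pos h1x
      linarith
    have hpx : p * x = 2/5 := by rw [hx]; field_simp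
    have hble : (1+x) ^ p ≤ 1.494 := by
      rw [hexp]
      calc Real.exp (p * Real.log (1+x)) ≤ Real.exp (2/5) := by
            apply Real.exp_le_exp.2
            calc p * Real.log (1+x) ≤ p * x := mul_le_mul_of_nonneg_left hloglex hp0.le
            _ = 2/5 := hpx
      _ ≤ 1.494 := exp_two_fifths_lt.le
    have h100 : (100:ℝ) ≤ (5*p) ^ p := by
      calc (100:ℝ) = (10:ℝ) ^ (2:ℝ) := by
            rw [show ((2:ℝ) = ((2:ℕ):ℝ)) by norm_num, Real.rpow_natCast]; norm_num
      _ ≤ (10:ℝ) ^ p := Real.rpow_le_rpow_of_exponent_le (by norm_num) hpge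
      _ ≤ (5*p) ^ p := Real.rpow_le_rpow (by norm_num) (by linarith) hp0.le
    have hpos : (0:ℝ) < (5*p) ^ p := Real.rpow_pos_of_pos h5p p
    have hbnn : (0:ℝ) ≤ (1+x) ^ p := Real.rpow_nonneg h1x.le p
    rw [hmul]
    nlinarith


lemma key_scalar {p s : ℝ} (hp : 1 ≤ p) (hs : 0 ≤ s)
    (h : 3 * s ^ p ≤ 1 + 2 * (2 + s) ^ p) : s ≤ 5 * p := by
  by_contra hc
  push_neg at hc
  have hp0 : (0:ℝ) < p := by linarith
  have h5p : (0:ℝ) < 5 * p := by linarith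
  set ψ : ℝ → ℝ := fun t => 3 * t ^ p - 2 * (2 + t) ^ p with hψ
  have hasD : ∀ t : ℝ, 0 < t →
      HasDerivAt ψ (3 * (p * t ^ (p-1)) - 2 * (p * (2+t) ^ (p-1))) t := by
    intro t ht
    have h1 : HasDerivAt (fun t : ℝ => t ^ p) (p * t ^ (p-1)) t :=
      Real.hasDerivAt_rpow_const (Or.inl ht.ne')
    have hinner : HasDerivAt (fun t : ℝ => 2 + t) 1 t := (hasDerivAt_id t).const_add 2
    have h2 : HasDerivAt (fun t : ℝ => (2+t) ^ p) (p * (2+t) ^ (p-1)) t := by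
      have := (Real.hasDerivAt_rpow_const
        (x := 2 + t) (p := p) (Or.inl (by linarith : (2:ℝ)+t ≠ 0))).comp t hinner
      simpa [Function.comp_def] using this
    exact (h1.const_mul 3).sub (h2.const_mul 2)
  have hmono : StrictMonoOn ψ (Ici (5*p)) := by
    apply strictMonoOn_of_deriv_pos (convex_Ici _)
    · intro t ht
      have ht0 : (0:ℝ) < t := lt_of_lt_of_le h5p ht
      exact (hasD t ht0).continuousAt.continuousWithinAt
    · intro t ht
      rw [interior_Ici] at ht
      have ht0 : (0:ℝ) < t := lt_trans h5p ht
      rw [(hasD t ht0).deriv]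
      have htp : (0:ℝ) < t ^ (p-1) := Real.rpow_pos_of_pos ht0 _
      have hsplit : (2:ℝ) + t = t * (1 + 2/t) := by field_simp; ring
      have h12t : (0:ℝ) < 1 + 2/t := by positivity
      have hmulr : (2+t) ^ (p-1) = t ^ (p-1) * (1 + 2/t) ^ (p-1) := by
        rw [hsplit, Real.mul_rpow ht0.le h12t.le]
      have hexp : (1 + 2/t) ^ (p-1) = Real.exp ((p-1) * Real.log (1 + 2/t)) := by
        rw [Real.rpow_def_of_pos h12t]; ring_nf
      have hlog : Real.log (1 + 2/t) ≤ 2/t := by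
        have := Real.log_le_sub_one_of_pos h12t
        linarith
      have hbound : (p-1) * Real.log (1 + 2/t) ≤ 2/5 := by
        have h1 : (p-1) * Real.log (1 + 2/t) ≤ (p-1) * (2/t) :=
          mul_le_mul_of_nonneg_left hlog (by linarith)
        have h2' : 2/t ≤ 2/(5*p) := by gcongr; exact ht.le
        have h2 : (p-1) * (2/t) ≤ (p-1) * (2/(5*p)) :=
          mul_le_mul_of_nonneg_left h2' (by linarith)
        have h3 : (p-1) * (2/(5*p)) ≤ 2/5 := by
          rw [show (p-1)*(2/(5*p)) = (2*(p-1))/(5*p) by ring,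
            div_le_div_iff₀ (by positivity) (by norm_num)]
          nlinarith
        linarith
      have hlt : (1 + 2/t) ^ (p-1) < 3/2 := by
        rw [hexp]
        calc Real.exp ((p-1) * Real.log (1 + 2/t)) ≤ Real.exp (2/5) :=
              Real.exp_le_exp.2 hbound
        _ < 1.494 := exp_two_fifths_lt
        _ < 3/2 := by norm_num
      have hkey : 2 * (2+t) ^ (p-1) < 3 * t ^ (p-1) := by
        rw [hmulr]
        nlinarith
      nlinarith
  have h1 : ψ (5*p) < ψ s := hmono self_mem_Ici (le_of_lt hc : 5*p ≤ s) hc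
  have h2 : (1:ℝ) ≤ ψ (5*p) := by
    have := A_ge_one hp
    simp only [hψ]
    rw [show (2:ℝ) + 5*p = 5*p + 2 by ring]
    linarith
  have h3 : ψ s ≤ 1 := by simp only [hψ]; linarith
  linarith

lemma key_scalar2 {p a t : ℝ} (hp : 1 ≤ p) (ha : 0 ≤ a) (ht : 0 ≤ t)
    (h : 3 * t ^ p ≤ a ^ p + 2 * (2*a + t) ^ p) : t ≤ 5 * p * a := by
  have hp0 : (0:ℝ) < p := by linarith
  rcases eq_or_lt_of_le ha with ha0 | ha0
  · rw [← ha0] at h ⊢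
    simp only [mul_zero, zero_add] at h ⊢
    rw [Real.zero_rpow hp0.ne'] at h
    have h3 : t = 0 := by
      by_contra htne
      have : (0:ℝ) < t ^ p := Real.rpow_pos_of_pos (lt_of_le_of_ne ht (Ne.symm htne)) p
      linarith
    simp [h3]
  · have hap : (0:ℝ) < a ^ p := Real.rpow_pos_of_pos ha0 p
    have e1 : (t/a) ^ p = t ^ p / a ^ p := Real.div_rpow ht ha p
    have e2 : (2 + t/a) ^ p = (2*a + t) ^ p / a ^ p := by
      rw [show (2:ℝ) + t/a = (2*a+t)/a by field_simp, Real.div_rpow (by linarith) ha]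
    have hdiv : 3 * (t/a) ^ p ≤ 1 + 2 * (2 + t/a) ^ p := by
      rw [e1, e2]
      rw [show (3:ℝ) * (t^p/a^p) = (3*t^p)/a^p by ring,
        show (1:ℝ) + 2*((2*a+t)^p/a^p) = (a^p + 2*(2*a+t)^p)/a^p by field_simp]
      exact (div_le_div_iff_of_pos_right hap).mpr h
    have := key_scalar hp (by positivity : (0:ℝ) ≤ t/a) hdiv
    rw [div_le_iff₀ ha0] at this
    linarith
end ScalarLemmas

section CombLemmas
open Finset

lemma exists_two_to_one {X : Type*} [DecidableEq X] :
    ∀ (n : ℕ) (A B : Finset X), B.card ≤ n → A.card ≤ 2 * B.card →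
    ∃ g : X → X, (∀ a ∈ A, g a ∈ B) ∧
      ∀ b : X, (A.filter (fun a => g a = b)).card ≤ 2 := by
  intro n
  induction n with
  | zero =>
    intro A B hB hA
    have hB0 : B.card = 0 := Nat.le_zero.mp hB
    have hA0 : A = ∅ := Finset.card_eq_zero.mp (by omega)
    refine ⟨id, ?_, ?_⟩
    · intro a ha; simp [hA0] at ha
    · intro b; simp [hA0]
  | succ n ih =>
    intro A B hB hA
    by_cases hAemp : A = ∅
    · refine ⟨id, ?_, ?_⟩
      · intro a ha; simp [hAemp] at ha
      · intro b; simp [hAemp]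
    · have hApos : 0 < A.card := Finset.card_pos.mpr (Finset.nonempty_of_ne_empty hAemp)
      have hBpos : 0 < B.card := by omega
      obtain ⟨b₀, hb₀⟩ := Finset.card_pos.mp hBpos
      by_cases hA2 : A.card ≤ 2
      · refine ⟨fun _ => b₀, fun a _ => hb₀, fun b => ?_⟩
        exact le_trans (Finset.card_filter_le _ _) hA2
      · have hA3 : 3 ≤ A.card := by omega
        obtain ⟨a₁, ha₁⟩ := Finset.card_pos.mp (by omega : 0 < A.card)
        have he1 : (A.erase a₁).card = A.card - 1 := Finset.card_erase_of_mem ha₁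
        obtain ⟨a₂, ha₂⟩ := Finset.card_pos.mp (by omega : 0 < (A.erase a₁).card)
        set A' := (A.erase a₁).erase a₂ with hA'
        set B' := B.erase b₀ with hB'
        have he2 : A'.card = A.card - 2 := by
          rw [hA', Finset.card_erase_of_mem ha₂, he1]
          omega
        have he3 : B'.card = B.card - 1 := Finset.card_erase_of_mem hb₀
        obtain ⟨g', hg1, hg2⟩ := ih A' B' (by omega) (by omega)
        refine ⟨fun x => if x = a₁ ∨ x = a₂ then b₀ else g' x, ?_, ?_⟩
        · intro a ha
          by_cases hcase : a = a₁ ∨ a = a₂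
          · simp [hcase]; exact hb₀
          · push_neg at hcase
            simp only [if_neg (by push_neg; exact hcase : ¬(a = a₁ ∨ a = a₂))]
            have haA' : a ∈ A' := by
              rw [hA']
              exact Finset.mem_erase.mpr ⟨hcase.2, Finset.mem_erase.mpr ⟨hcase.1, ha⟩⟩
            exact Finset.mem_of_mem_erase (hg1 a haA')
        · intro b
          by_cases hb : b = b₀
          · have hsub : A.filter
                (fun a => (if a = a₁ ∨ a = a₂ then b₀ else g' a) = b) ⊆ {a₁, a₂} := by
              intro a ha
              rw [Finset.mem_filter] at ha
              obtain ⟨haA, hae⟩ := ha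
              by_cases hcase : a = a₁ ∨ a = a₂
              · simpa [Finset.mem_insert, Finset.mem_singleton] using hcase
              · exfalso
                rw [if_neg hcase] at hae
                push_neg at hcase
                have haA' : a ∈ A' := by
                  rw [hA']
                  exact Finset.mem_erase.mpr ⟨hcase.2, Finset.mem_erase.mpr ⟨hcase.1, haA⟩⟩
                have := hg1 a haA'
                rw [hB', Finset.mem_erase] at this
                exact this.1 (hae.trans hb)
            calc (A.filter _).card ≤ ({a₁, a₂} : Finset X).card := Finset.card_le_card hsub
            _ ≤ 2 := Finset.card_insert_le _ _ |>.trans (by simp)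
          · have hsub : A.filter
                (fun a => (if a = a₁ ∨ a = a₂ then b₀ else g' a) = b) ⊆
                A'.filter (fun a => g' a = b) := by
              intro a ha
              rw [Finset.mem_filter] at ha
              obtain ⟨haA, hae⟩ := ha
              by_cases hcase : a = a₁ ∨ a = a₂
              · exfalso; rw [if_pos hcase] at hae; exact hb hae.symm
              · rw [if_neg hcase] at hae
                push_neg at hcase
                refine Finset.mem_filter.mpr ⟨?_, hae⟩
                rw [hA']
                exact Finset.mem_erase.mpr ⟨hcase.2, Finset.mem_erase.mpr ⟨hcase.1, haA⟩⟩
            exact le_trans (Finset.card_le_card hsub) (hg2 b)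


lemma exists_swap_map {V : Type*} [DecidableEq V] (F Fstar : Finset V)
    (hcard : F.card = Fstar.card) (nn : V → V) (hnn : ∀ y ∈ Fstar, nn y ∈ F) :
    ∃ r : V → V, (∀ y ∈ Fstar, r y ∈ F) ∧
      (∀ y ∈ Fstar, ∀ z ∈ Fstar, nn z = r y → z = y) ∧
      (∀ f : V, (Fstar.filter (fun y => r y = f)).card ≤ 2) := by
  classical
  set deg : V → ℕ := fun f => (Fstar.filter (fun y => nn y = f)).card with hdeg
  set A : Finset V := Fstar.filter (fun y => ¬ deg (nn y) = 1) with hA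
  set B : Finset V := F.filter (fun f => deg f = 0) with hB
  set D1 : Finset V := F.filter (fun f => deg f = 1) with hD1
  set E : Finset V := F.filter (fun f => ¬ deg f = 1) with hE
  set E2 : Finset V := E.filter (fun f => ¬ deg f = 0) with hE2
  have h1 : ∑ f ∈ F, deg f = Fstar.card :=
    (Finset.card_eq_sum_card_fiberwise hnn).symm
  have h2 : (Fstar.filter (fun y => deg (nn y) = 1)).card = D1.card := by
    have hmaps : ∀ y ∈ Fstar.filter (fun y => deg (nn y) = 1), nn y ∈ D1 := by
      intro y hy
      rw [Finset.mem_filter] at hy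
      exact Finset.mem_filter.mpr ⟨hnn y hy.1, hy.2⟩
    rw [Finset.card_eq_sum_card_fiberwise hmaps]
    have hfib : ∀ f ∈ D1,
        ((Fstar.filter (fun y => deg (nn y) = 1)).filter (fun y => nn y = f)).card = 1 := by
      intro f hf
      rw [hD1, Finset.mem_filter] at hf
      have heq : (Fstar.filter (fun y => deg (nn y) = 1)).filter (fun y => nn y = f) =
          Fstar.filter (fun y => nn y = f) := by
        ext y
        simp only [Finset.mem_filter]
        constructor
        · rintro ⟨⟨hy, _⟩, h⟩; exact ⟨hy, h⟩
        · rintro ⟨hy, h⟩; exact ⟨⟨hy, by rw [h]; exact hf.2⟩, h⟩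
      rw [heq]
      exact hf.2
    rw [Finset.sum_congr rfl hfib]
    simp
  have hAcard : A.card + D1.card = Fstar.card := by
    rw [hA, ← h2, add_comm]
    exact Finset.card_filter_add_card_filter_not _
  have h3 : ∑ f ∈ D1, deg f + ∑ f ∈ E, deg f = Fstar.card := by
    rw [← h1, hD1, hE]
    exact Finset.sum_filter_add_sum_filter_not _ _ _
  have h4 : ∑ f ∈ D1, deg f = D1.card := by
    rw [Finset.sum_congr rfl (fun f hf => (Finset.mem_filter.mp hf).2)]
    simp; rfl
  have h5 : ∑ f ∈ E, deg f = ∑ f ∈ E2, deg f := by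
    have := Finset.sum_filter_add_sum_filter_not E (fun f => ¬ deg f = 0) deg
    have hz : ∑ f ∈ E.filter (fun f => ¬¬ deg f = 0), deg f = 0 := by
      apply Finset.sum_eq_zero
      intro f hf
      have := (Finset.mem_filter.mp hf).2
      omega
    rw [← this, hE2, hz]
    omega
  have h6 : E2.card * 2 ≤ ∑ f ∈ E2, deg f := by
    have : ∀ f ∈ E2, 2 ≤ deg f := by
      intro f hf
      rw [hE2, Finset.mem_filter, hE, Finset.mem_filter] at hf
      omega
    exact Finset.card_nsmul_le_sum E2 deg 2 this
  have h7 : D1.card + E.card = F.card := by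
    rw [hD1, hE]; exact Finset.card_filter_add_card_filter_not _
  have hBE : B = E.filter (fun f => deg f = 0) := by
    rw [hB, hE, Finset.filter_filter]
    apply Finset.filter_congr
    intro f _
    omega
  have h8 : B.card + E2.card = E.card := by
    rw [hBE, hE2]
    have := Finset.card_filter_add_card_filter_not
      (s := E) (p := fun f => deg f = 0)
    convert this using 2
  have hcount : A.card ≤ 2 * B.card := by
    rw [h4, h5] at h3
    obtain ⟨S, hS⟩ : ∃ S, ∑ f ∈ E2, deg f = S := ⟨_, rfl⟩
    rw [hS] at h3 h6
    omega
  obtain ⟨g, hg1, hg2⟩ := exists_two_to_one B.card A B le_rfl hcount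
  set r : V → V := fun y => if deg (nn y) = 1 then nn y else g y with hrdef
  have hry : ∀ y, r y = if deg (nn y) = 1 then nn y else g y := fun y => rfl
  refine ⟨r, ?_, ?_, ?_⟩
  · intro y hy
    rw [hry]
    by_cases hc : deg (nn y) = 1
    · rw [if_pos hc]; exact hnn y hy
    · rw [if_neg hc]
      have hyA : y ∈ A := Finset.mem_filter.mpr ⟨hy, hc⟩
      exact (Finset.mem_filter.mp (hg1 y hyA)).1
  · intro y hy z hz hzeq
    rw [hry] at hzeq
    by_cases hc : deg (nn y) = 1
    · rw [if_pos hc] at hzeq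
      have hcard1 : (Fstar.filter (fun w => nn w = nn y)).card ≤ 1 := by
        have hrfl : deg (nn y) = (Fstar.filter (fun w => nn w = nn y)).card := rfl
        omega
      have hmem1 : z ∈ Fstar.filter (fun w => nn w = nn y) :=
        Finset.mem_filter.mpr ⟨hz, hzeq⟩
      have hmem2 : y ∈ Fstar.filter (fun w => nn w = nn y) :=
        Finset.mem_filter.mpr ⟨hy, rfl⟩
      exact Finset.card_le_one.mp hcard1 z hmem1 y hmem2
    · rw [if_neg hc] at hzeq
      exfalso
      have hyA : y ∈ A := Finset.mem_filter.mpr ⟨hy, hc⟩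
      have hgB : g y ∈ B := hg1 y hyA
      have hdeg0 : deg (g y) = 0 := (Finset.mem_filter.mp hgB).2
      have hmem : z ∈ Fstar.filter (fun w => nn w = g y) := Finset.mem_filter.mpr ⟨hz, hzeq⟩
      have hdeg0' : (Fstar.filter (fun w => nn w = g y)).card = 0 := hdeg0
      rw [Finset.card_eq_zero.mp hdeg0'] at hmem
      exact absurd hmem (Finset.notMem_empty z)
  · intro f
    have hfeq : Fstar.filter (fun y => r y = f) =
        Fstar.filter (fun y => (if deg (nn y) = 1 then nn y else g y) = f) := by
      apply Finset.filter_congr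
      intro y _
      rw [hry]
    rw [hfeq]
    by_cases hdf : deg f = 1
    · have hsub : Fstar.filter (fun y => (if deg (nn y) = 1 then nn y else g y) = f) ⊆
          Fstar.filter (fun y => nn y = f) := by
        intro y hy
        rw [Finset.mem_filter] at hy
        obtain ⟨hyF, hyeq⟩ := hy
        by_cases hc : deg (nn y) = 1
        · rw [if_pos hc] at hyeq; exact Finset.mem_filter.mpr ⟨hyF, hyeq⟩
        · exfalso
          rw [if_neg hc] at hyeq
          have hyA : y ∈ A := Finset.mem_filter.mpr ⟨hyF, hc⟩
          have hgB : g y ∈ B := hg1 y hyA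
          have : deg (g y) = 0 := (Finset.mem_filter.mp hgB).2
          rw [hyeq] at this
          omega
      calc (Fstar.filter _).card ≤ (Fstar.filter (fun y => nn y = f)).card :=
            Finset.card_le_card hsub
      _ ≤ 2 := by
            have hrfl : deg f = (Fstar.filter (fun y => nn y = f)).card := rfl
            omega
    · have hsub : Fstar.filter (fun y => (if deg (nn y) = 1 then nn y else g y) = f) ⊆
          A.filter (fun y => g y = f) := by
        intro y hy
        rw [Finset.mem_filter] at hy
        obtain ⟨hyF, hyeq⟩ := hy
        by_cases hc : deg (nn y) = 1
        · exfalso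
          rw [if_pos hc] at hyeq
          rw [hyeq] at hc
          exact hdf hc
        · rw [if_neg hc] at hyeq
          exact Finset.mem_filter.mpr ⟨Finset.mem_filter.mpr ⟨hyF, hc⟩, hyeq⟩
      exact le_trans (Finset.card_le_card hsub) (hg2 f)
end CombLemmas



open Finset

/-- Distance from a client `j` to a nonempty facility set `F`: `min_{f ∈ F} d(j,f)`. -/
noncomputable def distSet {V : Type*} [MetricSpace V] (j : V) (F : Finset V)
    (hF : F.Nonempty) : ℝ :=
  F.inf' hF fun f => dist j f

/-- The ℓ_p-norm cost of a nonempty facility set `F`: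
`Φ_p(F) = (∑_{j ∈ V} d(j,F)^p)^{1/p}`. -/
noncomputable def phiP {V : Type*} [MetricSpace V] [Fintype V] (p : ℝ) (F : Finset V)
    (hF : F.Nonempty) : ℝ :=
  (∑ j : V, distSet j F hF ^ p) ^ (1 / p)


open Finset

section MainProof
variable {V : Type*} [MetricSpace V] [Fintype V] [DecidableEq V]

lemma distSet_nonneg (j : V) (S : Finset V) (hS : S.Nonempty) : 0 ≤ distSet j S hS :=
  Finset.le_inf' hS _ (fun _ _ => dist_nonneg)

lemma rpow_one_div_cancel_le {a b p : ℝ} (hp : 0 < p) (ha : 0 ≤ a) (hb : 0 ≤ b)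
    (h : a ^ (1/p) ≤ b ^ (1/p)) : a ≤ b := by
  have h2 := Real.rpow_le_rpow (Real.rpow_nonneg ha _) h hp.le
  rw [← Real.rpow_mul ha, ← Real.rpow_mul hb, one_div_mul_cancel hp.ne', Real.rpow_one,
    Real.rpow_one] at h2
  exact h2

lemma rpow_one_div_rpow {a p : ℝ} (hp : 0 < p) (ha : 0 ≤ a) : (a ^ (1/p)) ^ p = a := by
  rw [← Real.rpow_mul ha, one_div_mul_cancel hp.ne', Real.rpow_one]

theorem lp_single_swap_local_opt'
    (p : ℝ) (hp : 1 ≤ p) (k : ℕ)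
    (F Fstar : Finset V) (hF : F.Nonempty) (hFstar : Fstar.Nonempty)
    (hcardF : F.card = k) (hcardFstar : Fstar.card = k)
    (hlocal : ∀ r ∈ F, ∀ f' : V,
      phiP p (insert f' (F.erase r)) (insert_nonempty _ _) ≥ phiP p F hF) :
    phiP p F hF ≤ 5 * p * phiP p Fstar hFstar ∧
      (p = 2 → phiP p F hF ≤ 9 * phiP p Fstar hFstar) := by
  classical
  have hp0 : (0:ℝ) < p := lt_of_lt_of_le one_pos hp
  -- nearest-point maps
  have hnnex : ∀ y : V, ∃ f, f ∈ F ∧ distSet y F hF = dist y f := by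
    intro y
    obtain ⟨i, hi, he⟩ := Finset.exists_mem_eq_inf' hF (fun f => dist y f)
    exact ⟨i, hi, he⟩
  choose nn hnnF hnnd using hnnex
  have hnsex : ∀ y : V, ∃ f, f ∈ Fstar ∧ distSet y Fstar hFstar = dist y f := by
    intro y
    obtain ⟨i, hi, he⟩ := Finset.exists_mem_eq_inf' hFstar (fun f => dist y f)
    exact ⟨i, hi, he⟩
  choose ns hnsF hnsd using hnsex
  obtain ⟨r, hr1, hr2, hr3⟩ := exists_swap_map F Fstar
    (hcardF.trans hcardFstar.symm) nn (fun y _ => hnnF y)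
  have hdn : ∀ j : V, 0 ≤ distSet j F hF := fun j => distSet_nonneg j F hF
  have hdsn : ∀ j : V, 0 ≤ distSet j Fstar hFstar := fun j => distSet_nonneg j Fstar hFstar
  have hmono_p : ∀ {a b : ℝ}, 0 ≤ a → a ≤ b → a ^ p ≤ b ^ p :=
    fun ha hab => Real.rpow_le_rpow ha hab hp0.le
  -- the swap inequalities
  have swap_ineq : ∀ y ∈ Fstar, 0 ≤ ∑ j : V,
      ((if ns j = y then distSet j Fstar hFstar ^ p - distSet j F hF ^ p else 0) +
       (if nn j = r y then
          (2 * distSet j Fstar hFstar + distSet j F hF) ^ p - distSet j F hF ^ p else 0)) := by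
    intro y hy
    have hne : (insert y (F.erase (r y))).Nonempty := insert_nonempty _ _
    have hlo := hlocal (r y) (hr1 y hy) y
    simp only [phiP, ge_iff_le] at hlo
    have hsum : ∑ j : V, distSet j F hF ^ p ≤
        ∑ j : V, distSet j (insert y (F.erase (r y))) hne ^ p := by
      apply rpow_one_div_cancel_le hp0
      · exact Finset.sum_nonneg (fun j _ => Real.rpow_nonneg (hdn j) p)
      · exact Finset.sum_nonneg
          (fun j _ => Real.rpow_nonneg (distSet_nonneg j _ hne) p)
      · exact hlo
    have hpt : ∀ j : V, distSet j (insert y (F.erase (r y))) hne ^ p ≤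
        distSet j F hF ^ p +
        ((if ns j = y then distSet j Fstar hFstar ^ p - distSet j F hF ^ p else 0) +
         (if nn j = r y then
            (2 * distSet j Fstar hFstar + distSet j F hF) ^ p - distSet j F hF ^ p else 0)) := by
      intro j
      have hd'nn : 0 ≤ distSet j (insert y (F.erase (r y))) hne := distSet_nonneg _ _ _
      have hite2 : 0 ≤ (if nn j = r y then
          (2 * distSet j Fstar hFstar + distSet j F hF) ^ p - distSet j F hF ^ p else 0) := by
        split
        · have : distSet j F hF ≤ 2 * distSet j Fstar hFstar + distSet j F hF := by
            linarith [hdsn j]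
          linarith [hmono_p (hdn j) this]
        · exact le_rfl
      by_cases h1 : ns j = y
      · rw [if_pos h1]
        have hyF' : y ∈ insert y (F.erase (r y)) := Finset.mem_insert_self _ _
        have hle : distSet j (insert y (F.erase (r y))) hne ≤ dist j y :=
          Finset.inf'_le _ hyF'
        have hdy : dist j y = distSet j Fstar hFstar := by
          rw [hnsd j, h1]
        rw [hdy] at hle
        have := hmono_p hd'nn hle
        linarith
      · rw [if_neg h1]
        by_cases h2 : nn j = r y
        · rw [if_pos h2]
          set w := nn (ns j) with hw
          have hwne : w ≠ r y := by
            intro hweq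
            exact h1 (hr2 y hy (ns j) (hnsF j) hweq)
          have hwF' : w ∈ insert y (F.erase (r y)) :=
            Finset.mem_insert_of_mem (Finset.mem_erase.mpr ⟨hwne, hnnF (ns j)⟩)
          have hle : distSet j (insert y (F.erase (r y))) hne ≤ dist j w :=
            Finset.inf'_le _ hwF'
          have htri : dist j w ≤ dist j (ns j) + dist (ns j) w := dist_triangle _ _ _
          have hw2 : dist (ns j) w = distSet (ns j) F hF := (hnnd (ns j)).symm
          have hw3 : distSet (ns j) F hF ≤ dist (ns j) (nn j) :=
            Finset.inf'_le _ (hnnF j)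
          have htri2 : dist (ns j) (nn j) ≤ dist (ns j) j + dist j (nn j) :=
            dist_triangle _ _ _
          have hfin : dist j w ≤ 2 * distSet j Fstar hFstar + distSet j F hF := by
            have e1 : dist j (ns j) = distSet j Fstar hFstar := (hnsd j).symm
            have e2 : dist (ns j) j = distSet j Fstar hFstar := by
              rw [dist_comm]; exact (hnsd j).symm
            have e3 : dist j (nn j) = distSet j F hF := (hnnd j).symm
            rw [hw2] at htri
            calc dist j w ≤ dist j (ns j) + distSet (ns j) F hF := htri
            _ ≤ dist j (ns j) + (dist (ns j) j + dist j (nn j)) := by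
                linarith [le_trans hw3 htri2]
            _ = 2 * distSet j Fstar hFstar + distSet j F hF := by
                rw [e1, e2, e3]; ring
          have := hmono_p hd'nn (le_trans hle hfin)
          linarith
        · rw [if_neg h2]
          have hnnF' : nn j ∈ insert y (F.erase (r y)) :=
            Finset.mem_insert_of_mem (Finset.mem_erase.mpr ⟨h2, hnnF j⟩)
          have hle : distSet j (insert y (F.erase (r y))) hne ≤ dist j (nn j) :=
            Finset.inf'_le _ hnnF'
          rw [← hnnd j] at hle
          have := hmono_p hd'nn hle
          linarith
    have h2 := Finset.sum_le_sum (fun j (_ : j ∈ Finset.univ) => hpt j)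
    rw [Finset.sum_add_distrib] at h2
    linarith
  -- summing over all swaps
  have total : (0:ℝ) ≤ ∑ j : V, ∑ y ∈ Fstar,
      ((if ns j = y then distSet j Fstar hFstar ^ p - distSet j F hF ^ p else 0) +
       (if nn j = r y then
          (2 * distSet j Fstar hFstar + distSet j F hF) ^ p - distSet j F hF ^ p else 0)) := by
    rw [Finset.sum_comm]
    exact Finset.sum_nonneg (fun y hy => swap_ineq y hy)
  have hper : ∀ j : V, ∑ y ∈ Fstar,
      ((if ns j = y then distSet j Fstar hFstar ^ p - distSet j F hF ^ p else 0) +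
       (if nn j = r y then
          (2 * distSet j Fstar hFstar + distSet j F hF) ^ p - distSet j F hF ^ p else 0)) ≤
      (distSet j Fstar hFstar ^ p - distSet j F hF ^ p) +
      2 * ((2 * distSet j Fstar hFstar + distSet j F hF) ^ p - distSet j F hF ^ p) := by
    intro j
    rw [Finset.sum_add_distrib]
    have e1 : ∑ y ∈ Fstar, (if ns j = y then
        distSet j Fstar hFstar ^ p - distSet j F hF ^ p else 0) =
        distSet j Fstar hFstar ^ p - distSet j F hF ^ p := by
      rw [Finset.sum_ite_eq Fstar (ns j)
        (fun _ => distSet j Fstar hFstar ^ p - distSet j F hF ^ p), if_pos (hnsF j)]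
    have hBnn : 0 ≤ (2 * distSet j Fstar hFstar + distSet j F hF) ^ p -
        distSet j F hF ^ p := by
      have : distSet j F hF ≤ 2 * distSet j Fstar hFstar + distSet j F hF := by
        linarith [hdsn j]
      linarith [hmono_p (hdn j) this]
    have e2 : ∑ y ∈ Fstar, (if nn j = r y then
        (2 * distSet j Fstar hFstar + distSet j F hF) ^ p - distSet j F hF ^ p else 0) ≤
        2 * ((2 * distSet j Fstar hFstar + distSet j F hF) ^ p - distSet j F hF ^ p) := by
      rw [← Finset.sum_filter, Finset.sum_const, nsmul_eq_mul]
      have hcle : (Fstar.filter (fun y => nn j = r y)).card ≤ 2 := by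
        have h3 := hr3 (nn j)
        have heq : Fstar.filter (fun y => nn j = r y) =
            Fstar.filter (fun y => r y = nn j) := by
          apply Finset.filter_congr
          intro y _
          exact ⟨Eq.symm, Eq.symm⟩
        rw [heq]
        exact h3
      apply mul_le_mul_of_nonneg_right _ hBnn
      exact_mod_cast hcle
    linarith
  have total2 : (0:ℝ) ≤ ∑ j : V,
      ((distSet j Fstar hFstar ^ p - distSet j F hF ^ p) +
       2 * ((2 * distSet j Fstar hFstar + distSet j F hF) ^ p - distSet j F hF ^ p)) :=
    le_trans total (Finset.sum_le_sum (fun j _ => hper j))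
  -- master inequality on sums
  have master : 3 * ∑ j : V, distSet j F hF ^ p ≤
      (∑ j : V, distSet j Fstar hFstar ^ p) +
      2 * ∑ j : V, (2 * distSet j Fstar hFstar + distSet j F hF) ^ p := by
    have e : ∑ j : V,
        ((distSet j Fstar hFstar ^ p - distSet j F hF ^ p) +
         2 * ((2 * distSet j Fstar hFstar + distSet j F hF) ^ p - distSet j F hF ^ p)) =
        ((∑ j : V, distSet j Fstar hFstar ^ p) +
         2 * ∑ j : V, (2 * distSet j Fstar hFstar + distSet j F hF) ^ p) -
        3 * ∑ j : V, distSet j F hF ^ p := by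
      rw [Finset.sum_add_distrib, Finset.sum_sub_distrib, ← Finset.mul_sum,
        Finset.sum_sub_distrib]
      ring
    rw [e] at total2
    linarith
  -- Minkowski
  set Sd := ∑ j : V, distSet j F hF ^ p with hSd
  set Ss := ∑ j : V, distSet j Fstar hFstar ^ p with hSs
  set Sm := ∑ j : V, (2 * distSet j Fstar hFstar + distSet j F hF) ^ p with hSm
  have hSdnn : 0 ≤ Sd := Finset.sum_nonneg (fun j _ => Real.rpow_nonneg (hdn j) p)
  have hSsnn : 0 ≤ Ss := Finset.sum_nonneg (fun j _ => Real.rpow_nonneg (hdsn j) p)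
  have hSmnn : 0 ≤ Sm := Finset.sum_nonneg (fun j _ => Real.rpow_nonneg (by
    have h1 := hdsn j; have h2 := hdn j; linarith) p)
  have mink : Sm ^ (1/p) ≤ 2 * Ss ^ (1/p) + Sd ^ (1/p) := by
    have h := Real.Lp_add_le_of_nonneg (s := (Finset.univ : Finset V))
      (f := fun j => 2 * distSet j Fstar hFstar) (g := fun j => distSet j F hF) hp
      (fun i _ => by show (0:ℝ) ≤ 2 * distSet i Fstar hFstar; linarith [hdsn i])
      (fun i _ => hdn i)
    have e : ∑ j : V, (2 * distSet j Fstar hFstar) ^ p = 2 ^ p * Ss := by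
      rw [hSs, Finset.mul_sum]
      apply Finset.sum_congr rfl
      intro j _
      rw [Real.mul_rpow (by norm_num) (hdsn j)]
    have e2 : (2 ^ p * Ss) ^ (1/p) = 2 * Ss ^ (1/p) := by
      rw [Real.mul_rpow (Real.rpow_nonneg (by norm_num) p) hSsnn]
      congr 1
      rw [← Real.rpow_mul (by norm_num : (0:ℝ) ≤ 2), mul_one_div, div_self hp0.ne',
        Real.rpow_one]
    rw [e, e2] at h
    exact h
  have hSmle : Sm ≤ (2 * Ss ^ (1/p) + Sd ^ (1/p)) ^ p := by
    calc Sm = (Sm ^ (1/p)) ^ p := (rpow_one_div_rpow hp0 hSmnn).symm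
    _ ≤ (2 * Ss ^ (1/p) + Sd ^ (1/p)) ^ p :=
        hmono_p (Real.rpow_nonneg hSmnn _) mink
  have hDnn : 0 ≤ Sd ^ (1/p) := Real.rpow_nonneg hSdnn _
  have hDsnn : 0 ≤ Ss ^ (1/p) := Real.rpow_nonneg hSsnn _
  have hmaster : 3 * (Sd ^ (1/p)) ^ p ≤
      (Ss ^ (1/p)) ^ p + 2 * (2 * Ss ^ (1/p) + Sd ^ (1/p)) ^ p := by
    rw [rpow_one_div_rpow hp0 hSdnn, rpow_one_div_rpow hp0 hSsnn]
    linarith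
  have hphiF : phiP p F hF = Sd ^ (1/p) := rfl
  have hphiFs : phiP p Fstar hFstar = Ss ^ (1/p) := rfl
  constructor
  · rw [hphiF, hphiFs]
    exact key_scalar2 hp hDsnn hDnn hmaster
  · intro hp2
    subst hp2
    rw [hphiF, hphiFs]
    set D := Sd ^ (1/(2:ℝ))
    set Ds := Ss ^ (1/(2:ℝ))
    have sq2 : ∀ x : ℝ, x ^ (2:ℝ) = x * x := by
      intro x
      rw [show (2:ℝ) = ((2:ℕ):ℝ) by norm_num, Real.rpow_natCast]
      ring
    rw [sq2, sq2, sq2] at hmaster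
    by_contra hcon
    push_neg at hcon
    have hD0 : 0 < D := lt_of_le_of_lt (by positivity) hcon
    nlinarith [mul_pos (show (0:ℝ) < D - 9 * Ds by linarith) (show (0:ℝ) < D + Ds by linarith)]

end MainProof

/-- At a single-swap local optimum for the ℓ_p objective,
`Φ_p(F) ≤ 5p·Φ_p(F*)`; moreover, for `p = 2`, `Φ_2(F) ≤ 9·Φ_2(F*)`. -/
theorem lp_single_swap_local_opt {V : Type*} [MetricSpace V] [Fintype V] [DecidableEq V]
    (p : ℝ) (hp : 1 ≤ p) (k : ℕ)
    (F Fstar : Finset V) (hF : F.Nonempty) (hFstar : Fstar.Nonempty)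
    (hcardF : F.card = k) (hcardFstar : Fstar.card = k)
    (hlocal : ∀ r ∈ F, ∀ f' : V,
      phiP p (insert f' (F.erase r)) (insert_nonempty _ _) ≥ phiP p F hF) :
    phiP p F hF ≤ 5 * p * phiP p Fstar hFstar ∧
      (p = 2 → phiP p F hF ≤ 9 * phiP p Fstar hFstar) := by
  exact lp_single_swap_local_opt' p hp k F Fstar hF hFstar hcardF hcardFstar hlocal
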